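/- Let d ≥ 3 and λ < −2. Then I₂(d,λ) > 0; explicitly, ∫_{−1}^{1} (1−t)^{−λ/2} (d²/dt²)[(1−t²)^{2+(d−3)/2}] dt > 0, which by the Rodrigues formula (1−t²)^{(d−3)/2} P_{2,d}(t) = R_{2,d} (d²/dt²)(1−t²)^{2+(d−3)/2} with R_{2,d} > 0 gives I₂(d,λ) = |S^{d−2}| ∫_{−1}^{1} (1−t)^{−λ/2} P_{2,d}(t) (1−t²)^{(d−3)/2} dt > 0. In particular the bound H_λ(g) ≤ H_λ(μ_g 𝟏) of Proposition 2.2 fails for λ < −2. -/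

import Mathlib

open MeasureTheory Metric Set
open scoped RealInnerProductSpace ENNReal

/-- The surface measure on the unit sphere `S^{n-1} ⊂ ℝ^n`. -/
noncomputable def sphereMeasure (n : ℕ) :
    Measure (Metric.sphere (0 : EuclideanSpace ℝ (Fin n)) 1) :=
  ((volume : Measure (EuclideanSpace ℝ (Fin n))).toSphere)

/-- The surface measure `|S^{n-1}|` of the unit sphere in `ℝ^n`. -/
noncomputable def sphereArea (n : ℕ) : ℝ :=
  (sphereMeasure n Set.univ).toReal

/-- The functional `H_λ(g) = ∫∫ g(η₁) conj(g(η₂)) |η₁ − η₂|^{−λ} dη₁ dη₂` on the unit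
sphere `S^{n-1} ⊂ ℝ^n` (it is real-valued, so we take the real part). -/
noncomputable def Hfun {n : ℕ} (lam : ℝ)
    (g : Metric.sphere (0 : EuclideanSpace ℝ (Fin n)) 1 → ℂ) : ℝ :=
  (∫ p : Metric.sphere (0 : EuclideanSpace ℝ (Fin n)) 1 ×
        Metric.sphere (0 : EuclideanSpace ℝ (Fin n)) 1,
      g p.1 * (starRingEnd ℂ) (g p.2) *
        ((‖(p.1 : EuclideanSpace ℝ (Fin n)) - (p.2 : EuclideanSpace ℝ (Fin n))‖ ^ (-lam) : ℝ) : ℂ)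
    ∂((sphereMeasure n).prod (sphereMeasure n))).re

/-- The average value `μ_g` of `g` on the unit sphere `S^{n-1} ⊂ ℝ^n`. -/
noncomputable def sphereAvg {n : ℕ}
    (g : Metric.sphere (0 : EuclideanSpace ℝ (Fin n)) 1 → ℂ) : ℂ :=
  (∫ η, g η ∂(sphereMeasure n)) / ((sphereArea n : ℝ) : ℂ)

/-- The beta function `B(x,y) = ∫₀¹ t^{x−1} (1−t)^{y−1} dt`. -/
noncomputable def betaFn (x y : ℝ) : ℝ :=
  ∫ t in (0 : ℝ)..1, t ^ (x - 1) * (1 - t) ^ (y - 1)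

open intervalIntegral
open scoped Pointwise

variable {a p : ℝ}

lemma sq_lt_one_of_Ioo {t : ℝ} (ht : t ∈ Ioo (-1:ℝ) 1) : (1:ℝ) - t ^ 2 > 0 := by
  nlinarith [ht.1, ht.2]

/-- first derivative formula on the open interval -/
lemma deriv_inner {t : ℝ} (ht : t ∈ Ioo (-1:ℝ) 1) :
    HasDerivAt (fun s : ℝ => (1 - s ^ 2) ^ p) (p * (1 - t ^ 2) ^ (p - 1) * (-2 * t)) t := by
  have h1 : HasDerivAt (fun s : ℝ => 1 - s ^ 2) (-2 * t) t := by
    simpa using ((hasDerivAt_pow 2 t).const_sub 1)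
  have h2 : (1 : ℝ) - t ^ 2 ≠ 0 := ne_of_gt (sq_lt_one_of_Ioo ht)
  have := h1.rpow_const (p := p) (Or.inl h2)
  convert this using 1
  ring

lemma deriv2_inner {t : ℝ} (ht : t ∈ Ioo (-1:ℝ) 1) :
    HasDerivAt (fun s : ℝ => p * (1 - s ^ 2) ^ (p - 1) * (-2 * s))
      (4*p*(p-1)*t^2*(1-t^2)^(p-2) - 2*p*(1-t^2)^(p-1)) t := by
  have h1 : HasDerivAt (fun s : ℝ => 1 - s ^ 2) (-2 * t) t := by
    simpa using ((hasDerivAt_pow 2 t).const_sub 1)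
  have h2 : (1 : ℝ) - t ^ 2 ≠ 0 := ne_of_gt (sq_lt_one_of_Ioo ht)
  have hA : HasDerivAt (fun s : ℝ => (1 - s ^ 2) ^ (p-1))
      ((-2*t) * (p-1) * (1 - t ^ 2) ^ (p-1-1)) t := h1.rpow_const (Or.inl h2)
  have hB : HasDerivAt (fun s : ℝ => -2 * s) (-2) t := by
    simpa using (hasDerivAt_id t).const_mul (-2:ℝ)
  have := ((hA.const_mul p).fun_mul hB)
  have hexp : p - 1 - 1 = p - 2 := by ring
  rw [hexp] at this
  exact this.congr_deriv (by ring)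

lemma iteratedDeriv_two_eq {t : ℝ} (ht : t ∈ Ioo (-1:ℝ) 1) :
    iteratedDeriv 2 (fun s : ℝ => (1 - s ^ 2) ^ p) t
      = 4*p*(p-1)*t^2*(1-t^2)^(p-2) - 2*p*(1-t^2)^(p-1) := by
  have h0 : iteratedDeriv 2 (fun s : ℝ => (1 - s ^ 2) ^ p) t
      = deriv (deriv (fun s : ℝ => (1 - s ^ 2) ^ p)) t := by
    rw [show (2:ℕ) = 1 + 1 from rfl, iteratedDeriv_succ, iteratedDeriv_one]
  rw [h0]
  have hev : deriv (fun s : ℝ => (1 - s ^ 2) ^ p)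
      =ᶠ[nhds t] (fun s : ℝ => p * (1 - s ^ 2) ^ (p - 1) * (-2 * s)) := by
    filter_upwards [isOpen_Ioo.mem_nhds ht] with s hs
    exact (deriv_inner hs).deriv
  rw [hev.deriv_eq]
  exact (deriv2_inner ht).deriv


/-- the algebraic identity -/
lemma key_identity (hp : 2 ≤ p) {t : ℝ} (ht : t ∈ Ioo (-1:ℝ) 1) :
    (1-t)^a * (4*p*(p-1)*t^2*(1-t^2)^(p-2) - 2*p*(1-t^2)^(p-1))
      = (-2*p*((1-t)^(a+p-1)*(1+t)^(p-1)) + -2*p*t*(-((a+p-1)*(1-t)^(a+p-2))*(1+t)^(p-1)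
            + (1-t)^(a+p-1)*((p-1)*(1+t)^(p-2))))
        + a * (-((a+p-1)*(1-t)^(a+p-2))*(1+t)^p + (1-t)^(a+p-1)*(p*(1+t)^(p-1)))
        + a*(a-1)*((1-t)^(a+p-2)*(1+t)^p) := by
  have hx : (0:ℝ) < 1 - t := by linarith [ht.2]
  have hy : (0:ℝ) < 1 + t := by linarith [ht.1]
  have hxy : (1:ℝ) - t^2 = (1-t)*(1+t) := by ring
  rw [hxy, Real.mul_rpow hx.le hy.le, Real.mul_rpow hx.le hy.le]
  have e1 : (1-t)^(p-1) = (1-t)^(p-2)*(1-t) := by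
    rw [show p-1 = (p-2)+1 by ring, Real.rpow_add hx, Real.rpow_one]
  have e2 : (1+t)^(p-1) = (1+t)^(p-2)*(1+t) := by
    rw [show p-1 = (p-2)+1 by ring, Real.rpow_add hy, Real.rpow_one]
  have e3 : (1+t)^p = (1+t)^(p-2)*(1+t)*(1+t) := by
    have h2 : (1+t)^(p-2)*((1+t)^(1:ℝ)*(1+t)^(1:ℝ)) = (1+t)^p := by
      rw [← Real.rpow_add hy, ← Real.rpow_add hy]; ring_nf
    rw [← h2, Real.rpow_one]; ring
  have e4 : (1-t)^(a+p-1) = (1-t)^a*((1-t)^(p-2)*(1-t)) := by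
    rw [show a+p-1 = a+((p-2)+1) by ring, Real.rpow_add hx, Real.rpow_add hx, Real.rpow_one]
  have e5 : (1-t)^(a+p-2) = (1-t)^a*(1-t)^(p-2) := by
    rw [show a+p-2 = a+(p-2) by ring, Real.rpow_add hx]
  rw [e1, e2, e3, e4, e5]
  ring

lemma hasDerivAt_one_sub_rpow {q t : ℝ} (hx : (0:ℝ) < 1 - t) :
    HasDerivAt (fun s : ℝ => (1-s)^q) (-(q*(1-t)^(q-1))) t := by
  have h1 : HasDerivAt (fun s : ℝ => 1 - s) (-1) t := by
    simpa using (hasDerivAt_id t).const_sub 1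
  have := h1.rpow_const (p := q) (Or.inl (ne_of_gt hx))
  convert this using 1; ring

lemma hasDerivAt_one_add_rpow {q t : ℝ} (hy : (0:ℝ) < 1 + t) :
    HasDerivAt (fun s : ℝ => (1+s)^q) (q*(1+t)^(q-1)) t := by
  have h1 : HasDerivAt (fun s : ℝ => 1 + s) (1) t := by
    simpa using (hasDerivAt_id t).const_add 1
  have := h1.rpow_const (p := q) (Or.inl (ne_of_gt hy))
  convert this using 1; ring

lemma hasDerivAt_F1 (ha : 1 < a) (hp : 2 ≤ p) {t : ℝ} (ht : t ∈ Ioo (-1:ℝ) 1) :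
    HasDerivAt (fun t : ℝ => -2*p*t*((1-t)^(a+p-1)*(1+t)^(p-1)))
      (-2*p*((1-t)^(a+p-1)*(1+t)^(p-1)) + -2*p*t*(-((a+p-1)*(1-t)^(a+p-2))*(1+t)^(p-1)
            + (1-t)^(a+p-1)*((p-1)*(1+t)^(p-2)))) t := by
  have hx : (0:ℝ) < 1 - t := by linarith [ht.2]
  have hy : (0:ℝ) < 1 + t := by linarith [ht.1]
  have h1 := (hasDerivAt_one_sub_rpow (q := a+p-1) hx).fun_mul (hasDerivAt_one_add_rpow (q := p-1) hy)
  have h2 : HasDerivAt (fun s : ℝ => -2*p*s) (-2*p) t := by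
    simpa using (hasDerivAt_id t).const_mul (-2*p)
  have := h2.fun_mul h1
  have ex : a+p-1-1 = a+p-2 := by ring
  have ey : p-1-1 = p-2 := by ring
  rw [ex, ey] at this
  convert this using 1

lemma hasDerivAt_F2 (ha : 1 < a) (hp : 2 ≤ p) {t : ℝ} (ht : t ∈ Ioo (-1:ℝ) 1) :
    HasDerivAt (fun t : ℝ => (1-t)^(a+p-1)*(1+t)^p)
      (-((a+p-1)*(1-t)^(a+p-2))*(1+t)^p + (1-t)^(a+p-1)*(p*(1+t)^(p-1))) t := by
  have hx : (0:ℝ) < 1 - t := by linarith [ht.2]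
  have hy : (0:ℝ) < 1 + t := by linarith [ht.1]
  have h1 := (hasDerivAt_one_sub_rpow (q := a+p-1) hx).fun_mul (hasDerivAt_one_add_rpow (q := p) hy)
  have ex : a+p-1-1 = a+p-2 := by ring
  rw [ex] at h1
  convert h1 using 1


lemma cont_rpow_sub {q : ℝ} (hq : 0 ≤ q) :
    Continuous (fun t : ℝ => (1-t)^q) :=
  (continuous_const.sub continuous_id).rpow_const (fun _ => Or.inr hq)

lemma cont_rpow_add {q : ℝ} (hq : 0 ≤ q) :
    Continuous (fun t : ℝ => (1+t)^q) :=
  (continuous_const.add continuous_id).rpow_const (fun _ => Or.inr hq)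

lemma keypos (ha : 1 < a) (hp : 2 ≤ p) :
    0 < ∫ t in (-1:ℝ)..1, (1-t)^a * iteratedDeriv 2 (fun s : ℝ => (1 - s^2) ^ p) t := by
  have hq1 : (0:ℝ) ≤ a+p-1 := by linarith
  have hq2 : (0:ℝ) ≤ a+p-2 := by linarith
  have hp1 : (0:ℝ) ≤ p-1 := by linarith
  have hp2 : (0:ℝ) ≤ p-2 := by linarith
  have hp0 : (0:ℝ) ≤ p := by linarith
  -- continuity facts
  have hcG1 : Continuous (fun t : ℝ =>
      -2*p*((1-t)^(a+p-1)*(1+t)^(p-1)) + -2*p*t*(-((a+p-1)*(1-t)^(a+p-2))*(1+t)^(p-1)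
            + (1-t)^(a+p-1)*((p-1)*(1+t)^(p-2)))) := by
    exact (continuous_const.mul ((cont_rpow_sub hq1).mul (cont_rpow_add hp1))).add
      ((continuous_const.mul continuous_id).mul
        ((((continuous_const.mul (cont_rpow_sub hq2)).neg).mul (cont_rpow_add hp1)).add
          ((cont_rpow_sub hq1).mul (continuous_const.mul (cont_rpow_add hp2)))))
  have hcG2 : Continuous (fun t : ℝ =>
      -((a+p-1)*(1-t)^(a+p-2))*(1+t)^p + (1-t)^(a+p-1)*(p*(1+t)^(p-1))) := by
    exact (((continuous_const.mul (cont_rpow_sub hq2)).neg.mul (cont_rpow_add hp0)).add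
      ((cont_rpow_sub hq1).mul (continuous_const.mul (cont_rpow_add hp1))))
  have hcw : Continuous (fun t : ℝ => (1-t)^(a+p-2)*(1+t)^p) :=
    (cont_rpow_sub hq2).mul (cont_rpow_add hp0)
  have hiG1 := hcG1.intervalIntegrable (a := -1) (b := 1) (μ := volume)
  have hiG2 := hcG2.intervalIntegrable (a := -1) (b := 1) (μ := volume)
  have hiw := hcw.intervalIntegrable (a := -1) (b := 1) (μ := volume)
  -- rewrite the integrand
  have step1 : (∫ t in (-1:ℝ)..1, (1-t)^a * iteratedDeriv 2 (fun s : ℝ => (1 - s^2) ^ p) t)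
      = ∫ t in (-1:ℝ)..1, ((-2*p*((1-t)^(a+p-1)*(1+t)^(p-1))
            + -2*p*t*(-((a+p-1)*(1-t)^(a+p-2))*(1+t)^(p-1)
            + (1-t)^(a+p-1)*((p-1)*(1+t)^(p-2))))
        + a * (-((a+p-1)*(1-t)^(a+p-2))*(1+t)^p + (1-t)^(a+p-1)*(p*(1+t)^(p-1)))
        + a*(a-1)*((1-t)^(a+p-2)*(1+t)^p)) := by
    apply intervalIntegral.integral_congr_ae
    have h1 : ∀ᵐ (x:ℝ) ∂volume, x ≠ 1 := by
      rw [MeasureTheory.ae_iff]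
      simpa using measure_singleton (1:ℝ)
    filter_upwards [h1] with x hx hmem
    rw [Set.uIoc_of_le (by norm_num : (-1:ℝ) ≤ 1)] at hmem
    have hxmem : x ∈ Ioo (-1:ℝ) 1 := ⟨hmem.1, lt_of_le_of_ne hmem.2 hx⟩
    rw [iteratedDeriv_two_eq hxmem, key_identity hp hxmem]
  rw [step1]
  rw [intervalIntegral.integral_add (hiG1.add (hiG2.const_mul a)) (hiw.const_mul _),
      intervalIntegral.integral_add hiG1 (hiG2.const_mul a),
      intervalIntegral.integral_const_mul, intervalIntegral.integral_const_mul]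
  have hF1 : (∫ t in (-1:ℝ)..1, (-2*p*((1-t)^(a+p-1)*(1+t)^(p-1))
            + -2*p*t*(-((a+p-1)*(1-t)^(a+p-2))*(1+t)^(p-1)
            + (1-t)^(a+p-1)*((p-1)*(1+t)^(p-2))))) = 0 := by
    rw [intervalIntegral.integral_eq_sub_of_hasDeriv_right_of_le (by norm_num)
      ((continuous_const.mul continuous_id).mul ((cont_rpow_sub hq1).mul (cont_rpow_add hp1))).continuousOn
      (fun t ht => (hasDerivAt_F1 ha hp ht).hasDerivWithinAt) hiG1]
    have e1 : ((1:ℝ)-1)^(a+p-1) = 0 := by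
      rw [show (1:ℝ)-1 = 0 by norm_num, Real.zero_rpow (by linarith)]
    have e2 : ((1:ℝ)+(-1))^(p-1) = 0 := by
      rw [show (1:ℝ)+(-1) = 0 by norm_num, Real.zero_rpow (by linarith)]
    simp only [Pi.mul_apply, id, e1, e2]
    ring
  have hF2 : (∫ t in (-1:ℝ)..1, (-((a+p-1)*(1-t)^(a+p-2))*(1+t)^p
      + (1-t)^(a+p-1)*(p*(1+t)^(p-1)))) = 0 := by
    rw [intervalIntegral.integral_eq_sub_of_hasDeriv_right_of_le (by norm_num)
      ((cont_rpow_sub hq1).mul (cont_rpow_add hp0)).continuousOn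
      (fun t ht => (hasDerivAt_F2 ha hp ht).hasDerivWithinAt) hiG2]
    have e1 : ((1:ℝ)-1)^(a+p-1) = 0 := by
      rw [show (1:ℝ)-1 = 0 by norm_num, Real.zero_rpow (by linarith)]
    have e2 : ((1:ℝ)+(-1))^p = 0 := by
      rw [show (1:ℝ)+(-1) = 0 by norm_num, Real.zero_rpow (by linarith)]
    simp only [Pi.mul_apply, id, e1, e2]
    ring
  rw [hF1, hF2]
  have hwpos : 0 < ∫ t in (-1:ℝ)..1, (1-t)^(a+p-2)*(1+t)^p := by
    apply intervalIntegral_pos_of_pos_on hiw _ (by norm_num)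
    intro x hx
    have hx1 : (0:ℝ) < 1 - x := by linarith [hx.2]
    have hx2 : (0:ℝ) < 1 + x := by linarith [hx.1]
    exact mul_pos (Real.rpow_pos_of_pos hx1 _) (Real.rpow_pos_of_pos hx2 _)
  have h0 : 0 < a*(a-1) := by nlinarith
  have := mul_pos h0 hwpos
  linarith

lemma sphereArea_pos (n : ℕ) (hn : 1 ≤ n) : 0 < sphereArea n := by
  rw [sphereArea, sphereMeasure]
  apply ENNReal.toReal_pos
  · rw [Measure.toSphere_apply_univ]
    have h1 : (Module.finrank ℝ (EuclideanSpace ℝ (Fin n)) : ℝ≥0∞) ≠ 0 := by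
      simp [finrank_euclideanSpace_fin]
      omega
    have h2 : (volume (ball (0 : EuclideanSpace ℝ (Fin n)) 1)) ≠ 0 :=
      (isOpen_ball.measure_pos volume (nonempty_ball.2 one_pos)).ne'
    exact mul_ne_zero h1 h2
  · exact measure_ne_top _ _


lemma cap_meas {d : ℕ} (P : EuclideanSpace ℝ (Fin d)) (ε : ℝ) :
    MeasurableSet ((Subtype.val : sphere (0:EuclideanSpace ℝ (Fin d)) 1 →
      EuclideanSpace ℝ (Fin d)) ⁻¹' (ball P ε)) :=
  (isOpen_ball.preimage continuous_subtype_val).measurableSet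

lemma cap_pos {d : ℕ} (hd : 1 ≤ d) (P : EuclideanSpace ℝ (Fin d)) (hP : ‖P‖ = 1)
    {ε : ℝ} (hε : 0 < ε) :
    0 < (volume : Measure (EuclideanSpace ℝ (Fin d))).toSphere
      ((Subtype.val : sphere (0:EuclideanSpace ℝ (Fin d)) 1 →
        EuclideanSpace ℝ (Fin d)) ⁻¹' (ball P ε)) := by
  rw [Measure.toSphere_apply' _ (cap_meas P ε)]
  have hE : True := trivial
  set V : Set (EuclideanSpace ℝ (Fin d)) := {y : EuclideanSpace ℝ (Fin d) | y ≠ 0} ∩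
    ((fun y : EuclideanSpace ℝ (Fin d) => (‖y‖, ‖y‖⁻¹ • y)) ⁻¹' ((Ioo (0:ℝ) 1) ×ˢ (ball P ε))) with hVdef
  have hopen : IsOpen V := by
    apply ContinuousOn.isOpen_inter_preimage ?_ isOpen_ne (isOpen_Ioo.prod isOpen_ball)
    apply ContinuousOn.prodMk continuous_norm.continuousOn
    exact (continuous_norm.continuousOn.inv₀
      (fun y hy => norm_ne_zero_iff.2 hy)).smul continuousOn_id
  have hPne : P ≠ 0 := by
    intro h; rw [h, norm_zero] at hP; norm_num at hP
  have hne : ((1/2 : ℝ) • P) ∈ V := by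
    refine ⟨?_, ?_, ?_⟩
    · exact smul_ne_zero (by norm_num) hPne
    · show ‖(1/2 : ℝ) • P‖ ∈ Ioo (0:ℝ) 1
      have hnc : ‖(1/2 : ℝ) • P‖ = 1/2 := by
        rw [norm_smul, hP]; norm_num
      rw [hnc]; constructor <;> norm_num
    · show ‖(1/2 : ℝ) • P‖⁻¹ • ((1/2 : ℝ) • P) ∈ ball P ε
      have hnc : ‖(1/2 : ℝ) • P‖ = 1/2 := by
        rw [norm_smul, hP]; norm_num
      have heq : ‖(1/2 : ℝ) • P‖⁻¹ • ((1/2 : ℝ) • P) = P := by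
        rw [hnc, smul_smul]; norm_num
      rw [heq]
      exact mem_ball_self hε
  have hsub : V ⊆ (Ioo (0:ℝ) 1) •
      (Subtype.val '' ((Subtype.val : sphere (0:EuclideanSpace ℝ (Fin d)) 1 → EuclideanSpace ℝ (Fin d)) ⁻¹' (ball P ε))) := by
    rintro y ⟨hy0, hymem⟩
    obtain ⟨hy1, hy2⟩ := hymem
    have hyne : ‖y‖ ≠ 0 := norm_ne_zero_iff.2 hy0
    have hxnorm : ‖‖y‖⁻¹ • y‖ = 1 := by
      rw [norm_smul, Real.norm_eq_abs, abs_of_nonneg (inv_nonneg.2 (norm_nonneg y)),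
        inv_mul_cancel₀ hyne]
    refine Set.mem_smul.2 ⟨‖y‖, hy1, ‖y‖⁻¹ • y, ?_, smul_inv_smul₀ hyne y⟩
    exact ⟨⟨‖y‖⁻¹ • y, mem_sphere_zero_iff_norm.2 hxnorm⟩, hy2, rfl⟩
  have hpos : 0 < volume V := hopen.measure_pos volume ⟨_, hne⟩
  have hle := measure_mono (μ := (volume : Measure (EuclideanSpace ℝ (Fin d)))) hsub
  apply ENNReal.mul_pos
  · simp [finrank_euclideanSpace_fin]
    omega
  · exact (lt_of_lt_of_le hpos hle).ne'


section pts
variable {d : ℕ}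

lemma fin01_ne [NeZero d] (hd : 3 ≤ d) : (0 : Fin d) ≠ (1 : Fin d) := by
  apply Fin.ne_of_val_ne
  rw [Fin.val_zero, Fin.val_one']
  have : 1 % d = 1 := Nat.mod_eq_of_lt (by omega)
  omega

noncomputable def u0 (d : ℕ) [NeZero d] : EuclideanSpace ℝ (Fin d) :=
  EuclideanSpace.single 0 (1:ℝ)
noncomputable def u1 (d : ℕ) [NeZero d] : EuclideanSpace ℝ (Fin d) :=
  EuclideanSpace.single 1 (1:ℝ)

variable [NeZero d]

lemma norm_u0 : ‖u0 d‖ = 1 := by simp [u0, EuclideanSpace.norm_single]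
lemma norm_u1 : ‖u1 d‖ = 1 := by simp [u1, EuclideanSpace.norm_single]

lemma inner_u0_u1 (hd : 3 ≤ d) : ⟪u0 d, u1 d⟫ = 0 := by
  rw [u0, u1, EuclideanSpace.inner_single_left]
  simp [EuclideanSpace.single_apply, (fin01_ne hd).symm]

lemma norm_u0_sub_u1 (hd : 3 ≤ d) : ‖u0 d - u1 d‖ = Real.sqrt 2 := by
  have h : ‖u0 d - u1 d‖ ^ 2 = 2 := by
    rw [norm_sub_sq_real, inner_u0_u1 hd, norm_u0, norm_u1]; ring
  rw [← Real.sqrt_sq (norm_nonneg (u0 d - u1 d)), h]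

lemma norm_u0_add_u1 (hd : 3 ≤ d) : ‖u0 d + u1 d‖ = Real.sqrt 2 := by
  have h : ‖u0 d + u1 d‖ ^ 2 = 2 := by
    rw [norm_add_sq_real, inner_u0_u1 hd, norm_u0, norm_u1]; ring
  rw [← Real.sqrt_sq (norm_nonneg (u0 d + u1 d)), h]

lemma norm_two_u0 : ‖u0 d - -(u0 d)‖ = 2 := by
  rw [sub_neg_eq_add, ← two_smul ℝ (u0 d), norm_smul, norm_u0]
  norm_num

end pts

section Qpos
variable {s : ℝ}

lemma sqrt2_rpow : (Real.sqrt 2) ^ s = (2:ℝ) ^ (s/2) := by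
  rw [Real.sqrt_eq_rpow, ← Real.rpow_mul (by norm_num : (0:ℝ) ≤ 2),
    show (1:ℝ)/2*s = s/2 by ring]

lemma Qpos (hs : 2 < s) : 0 < 4*(2:ℝ)^s - 8*(2:ℝ)^(s/2) := by
  have hb : (2:ℝ) < (2:ℝ)^(s/2) := by
    nth_rewrite 1 [show (2:ℝ) = (2:ℝ)^(1:ℝ) by norm_num]
    exact Real.rpow_lt_rpow_left_iff (by norm_num) |>.2 (by linarith)
  have h2 : (2:ℝ)^s = (2:ℝ)^(s/2) * (2:ℝ)^(s/2) := by
    rw [← Real.rpow_add (by norm_num : (0:ℝ) < 2)]; ring_nf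
  rw [h2]
  nlinarith [hb]

end Qpos


lemma norm_sub_neg_self {E : Type*} [NormedAddCommGroup E] [NormedSpace ℝ E]
    {v : E} (hv : ‖v‖ = 1) : ‖v - -v‖ = 2 := by
  rw [sub_neg_eq_add, ← two_smul ℝ v, norm_smul, hv]
  norm_num


set_option maxHeartbeats 2000000 in
lemma part3 (d : ℕ) (hd : 3 ≤ d) (lam : ℝ) (hlam : lam < -2) :
    ∃ g : Metric.sphere (0 : EuclideanSpace ℝ (Fin d)) 1 → ℂ,
        Integrable g (sphereMeasure d) ∧
          Hfun lam g >
            Hfun lam (fun _ : Metric.sphere (0 : EuclideanSpace ℝ (Fin d)) 1 => sphereAvg g) := by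
  haveI : NeZero d := ⟨by omega⟩
  haveI hfin : IsFiniteMeasure (sphereMeasure d) := by
    rw [sphereMeasure]; infer_instance
  set s : ℝ := -lam with hs_def
  have hs : 2 < s := by rw [hs_def]; linarith
  have hs0 : (0:ℝ) ≤ s := by linarith
  -- the four points
  set P : Fin 4 → EuclideanSpace ℝ (Fin d) := ![u0 d, -(u0 d), u1 d, -(u1 d)] with hP_def
  set c : Fin 4 → ℝ := ![1, 1, -1, -1] with hc_def
  have hPnorm : ∀ i, ‖P i‖ = 1 := by
    intro i; fin_cases i <;> simp [hP_def, norm_u0, norm_u1]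
  have hc1 : ∀ i j, c i * c j = 1 ∨ c i * c j = -1 := by
    intro i j; fin_cases i <;> fin_cases j <;> norm_num [hc_def]
  -- the kernel values
  set K : Fin 4 → Fin 4 → ℝ := fun i j => ‖P i - P j‖ ^ s with hK_def
  set Q : ℝ := 4*(2:ℝ)^s - 8*(2:ℝ)^(s/2) with hQ_def
  have hQpos : 0 < Q := Qpos hs
  have hQsum : ∑ i, ∑ j, c i * c j * K i j = Q := by
    have hsq : ∀ v w : EuclideanSpace ℝ (Fin d), ‖v - w‖ = Real.sqrt 2 → ‖v - w‖ ^ s = (2:ℝ)^(s/2) := by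
      intro v w h; rw [h, sqrt2_rpow]
    have c1 : ‖u0 d - u1 d‖ = Real.sqrt 2 := norm_u0_sub_u1 hd
    have cadd : ‖u0 d + u1 d‖ = Real.sqrt 2 := norm_u0_add_u1 hd
    have c2 : ‖u0 d - -(u1 d)‖ = Real.sqrt 2 := by rw [sub_neg_eq_add]; exact cadd
    have c3 : ‖-(u0 d) - u1 d‖ = Real.sqrt 2 := by
      rw [show -(u0 d) - u1 d = -(u0 d + u1 d) by abel, norm_neg]; exact cadd
    have c4 : ‖-(u0 d) - -(u1 d)‖ = Real.sqrt 2 := by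
      rw [show -(u0 d) - -(u1 d) = -(u0 d - u1 d) by abel, norm_neg]; exact c1
    have c5 : ‖u1 d - u0 d‖ = Real.sqrt 2 := by
      rw [show u1 d - u0 d = -(u0 d - u1 d) by abel, norm_neg]; exact c1
    have c6 : ‖u1 d - -(u0 d)‖ = Real.sqrt 2 := by
      rw [show u1 d - -(u0 d) = u0 d + u1 d by abel]; exact cadd
    have c7 : ‖-(u1 d) - u0 d‖ = Real.sqrt 2 := by
      rw [show -(u1 d) - u0 d = -(u0 d + u1 d) by abel, norm_neg]; exact cadd
    have c8 : ‖-(u1 d) - -(u0 d)‖ = Real.sqrt 2 := by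
      rw [show -(u1 d) - -(u0 d) = u0 d - u1 d by abel]; exact c1
    have h2a : ‖u0 d - -(u0 d)‖ = 2 := norm_sub_neg_self norm_u0
    have h2b : ‖-(u0 d) - u0 d‖ = 2 := by
      rw [show -(u0 d) - u0 d = -(u0 d - -(u0 d)) by abel, norm_neg]; exact h2a
    have h2c : ‖u1 d - -(u1 d)‖ = 2 := norm_sub_neg_self norm_u1
    have h2d : ‖-(u1 d) - u1 d‖ = 2 := by
      rw [show -(u1 d) - u1 d = -(u1 d - -(u1 d)) by abel, norm_neg]; exact h2c
    simp only [hK_def, hc_def, hP_def, Fin.sum_univ_four, Matrix.cons_val_zero,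
      Matrix.cons_val_one, Matrix.head_cons, Matrix.cons_val_two, Matrix.cons_val_three,
      Matrix.tail_cons, Matrix.head_fin_const]
    rw [c1, c2, c3, c4, c5, c6, c7, c8, h2a, h2b, h2c, h2d]
    simp only [sub_self, norm_zero]
    rw [Real.zero_rpow (by linarith : s ≠ 0), sqrt2_rpow, hQ_def]
    ring
  set δ : ℝ := Q / 17 with hδ_def
  have hδpos : 0 < δ := by positivity
  -- choose the cap radius
  have hcont : ∀ ij : Fin 4 × Fin 4, ∃ e, 0 < e ∧ ∀ x y : EuclideanSpace ℝ (Fin d),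
      dist x (P ij.1) < e → dist y (P ij.2) < e → |‖x - y‖ ^ s - K ij.1 ij.2| ≤ δ := by
    intro ij
    have hc : ContinuousAt (fun q : EuclideanSpace ℝ (Fin d) × EuclideanSpace ℝ (Fin d) =>
        ‖q.1 - q.2‖ ^ s) (P ij.1, P ij.2) :=
      (((continuous_fst.sub continuous_snd).norm).rpow_const (fun _ => Or.inr hs0)).continuousAt
    rw [Metric.continuousAt_iff] at hc
    obtain ⟨ee, hee, hp⟩ := hc δ hδpos
    refine ⟨ee, hee, fun x y hx hy => ?_⟩
    have hdist : dist ((x, y) : EuclideanSpace ℝ (Fin d) × EuclideanSpace ℝ (Fin d))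
        (P ij.1, P ij.2) < ee := by
      rw [Prod.dist_eq]
      exact max_lt hx hy
    have h2 := hp hdist
    rw [Real.dist_eq] at h2
    exact le_of_lt h2
  choose e he hprop using hcont
  set ε : ℝ := Finset.univ.inf' Finset.univ_nonempty e with hε_def
  have hεpos : 0 < ε := by
    rw [hε_def, Finset.lt_inf'_iff]
    exact fun ij _ => he ij
  have hεle : ∀ ij : Fin 4 × Fin 4, ε ≤ e ij := fun ij =>
    Finset.inf'_le _ (Finset.mem_univ ij)
  -- the caps
  set A : Fin 4 → Set (sphere (0:EuclideanSpace ℝ (Fin d)) 1) :=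
    fun i => (Subtype.val : sphere (0:EuclideanSpace ℝ (Fin d)) 1 →
        EuclideanSpace ℝ (Fin d)) ⁻¹' (ball (P i) ε) with hA_def
  have hAmeas : ∀ i, MeasurableSet (A i) := fun i => cap_meas (P i) ε
  set m : Fin 4 → ℝ := fun i => (sphereMeasure d (A i)).toReal with hm_def
  have hmpos : ∀ i, 0 < m i := by
    intro i
    apply ENNReal.toReal_pos _ (measure_ne_top _ _)
    have := cap_pos (by omega) (P i) (hPnorm i) hεpos
    rw [sphereMeasure]
    exact this.ne'
  -- the function
  set ind : Fin 4 → (sphere (0:EuclideanSpace ℝ (Fin d)) 1) → ℝ :=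
    fun i => (A i).indicator (fun _ => (1:ℝ)) with hind_def
  set wR : (sphere (0:EuclideanSpace ℝ (Fin d)) 1) → ℝ :=
    fun η => ∑ i, (c i / m i) * ind i η with hwR_def
  set g : (sphere (0:EuclideanSpace ℝ (Fin d)) 1) → ℂ := fun η => ((wR η : ℝ) : ℂ) with hg_def
  have hind_meas : ∀ i, Measurable (ind i) :=
    fun i => measurable_const.indicator (hAmeas i)
  have hind_int : ∀ i, Integrable (ind i) (sphereMeasure d) :=
    fun i => (integrable_const (1:ℝ)).indicator (hAmeas i)
  have hwR_int : Integrable wR (sphereMeasure d) := by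
    apply integrable_finset_sum
    intro i _
    exact ((hind_int i).const_mul _)
  have hg_int : Integrable g (sphereMeasure d) := by
    rw [hg_def]
    exact hwR_int.ofReal
  refine ⟨g, hg_int, ?_⟩
  -- average is zero
  have hwR_avg : ∫ η, wR η ∂(sphereMeasure d) = 0 := by
    rw [hwR_def]
    rw [integral_finset_sum _ (fun i _ => (hind_int i).const_mul _)]
    have : ∀ i, ∫ η, (c i / m i) * ind i η ∂(sphereMeasure d) = c i := by
      intro i
      rw [MeasureTheory.integral_const_mul, hind_def]
      simp only []
      rw [integral_indicator_const (1:ℝ) (hAmeas i)]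
      rw [smul_eq_mul, mul_one, measureReal_def]
      have hmi := hmpos i
      rw [hm_def]
      exact div_mul_cancel₀ _ hmi.ne'
    rw [Finset.sum_congr rfl (fun i _ => this i)]
    simp [hc_def, Fin.sum_univ_four]
  have hAvg : sphereAvg g = 0 := by
    rw [sphereAvg, hg_def]
    simp only []
    rw [show (∫ η, ((wR η : ℝ) : ℂ) ∂(sphereMeasure d)) = ((∫ η, wR η ∂(sphereMeasure d) : ℝ) : ℂ)
      from integral_ofReal, hwR_avg]
    simp
  rw [hAvg]
  have hRHS : Hfun lam (fun _ : Metric.sphere (0 : EuclideanSpace ℝ (Fin d)) 1 => (0:ℂ)) = 0 := by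
    simp [Hfun]
  rw [hRHS]
  -- the kernel on the sphere
  set Kr : (sphere (0:EuclideanSpace ℝ (Fin d)) 1) × (sphere (0:EuclideanSpace ℝ (Fin d)) 1) → ℝ :=
    fun p => ‖(p.1 : EuclideanSpace ℝ (Fin d)) - (p.2 : EuclideanSpace ℝ (Fin d))‖ ^ s with hKr_def
  have hKr_cont : Continuous Kr := by
    rw [hKr_def]
    exact (((continuous_subtype_val.comp continuous_fst).sub
      (continuous_subtype_val.comp continuous_snd)).norm).rpow_const (fun _ => Or.inr hs0)
  have hKr_nonneg : ∀ p, 0 ≤ Kr p := fun p => Real.rpow_nonneg (norm_nonneg _) _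
  have hKr_bound : ∀ p, Kr p ≤ (2:ℝ)^s := by
    intro p
    apply Real.rpow_le_rpow (norm_nonneg _) _ hs0
    have h1 : ‖(p.1 : EuclideanSpace ℝ (Fin d))‖ = 1 := mem_sphere_zero_iff_norm.1 p.1.2
    have h2 : ‖(p.2 : EuclideanSpace ℝ (Fin d))‖ = 1 := mem_sphere_zero_iff_norm.1 p.2.2
    calc ‖(p.1 : EuclideanSpace ℝ (Fin d)) - (p.2 : EuclideanSpace ℝ (Fin d))‖
        ≤ ‖(p.1 : EuclideanSpace ℝ (Fin d))‖ + ‖(p.2 : EuclideanSpace ℝ (Fin d))‖ :=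
          norm_sub_le _ _
      _ = 2 := by rw [h1, h2]; norm_num
  -- LHS equals the real double integral
  have hLHS : Hfun lam g = ∫ p, wR p.1 * wR p.2 * Kr p
      ∂((sphereMeasure d).prod (sphereMeasure d)) := by
    rw [Hfun]
    have hfun_eq : (fun p : (sphere (0:EuclideanSpace ℝ (Fin d)) 1) ×
          (sphere (0:EuclideanSpace ℝ (Fin d)) 1) =>
        g p.1 * (starRingEnd ℂ) (g p.2) *
          ((‖(p.1 : EuclideanSpace ℝ (Fin d)) - (p.2 : EuclideanSpace ℝ (Fin d))‖ ^ (-lam) : ℝ) : ℂ))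
        = fun p => ((wR p.1 * wR p.2 * Kr p : ℝ) : ℂ) := by
      funext p
      rw [hg_def]
      simp only []
      rw [Complex.conj_ofReal, hKr_def]
      simp only [← hs_def]
      push_cast
      ring
    rw [hfun_eq]
    rw [show (∫ p, ((wR p.1 * wR p.2 * Kr p : ℝ) : ℂ)
        ∂((sphereMeasure d).prod (sphereMeasure d)))
        = ((∫ p, wR p.1 * wR p.2 * Kr p ∂((sphereMeasure d).prod (sphereMeasure d)) : ℝ) : ℂ)
      from integral_ofReal, Complex.ofReal_re]
  rw [hLHS]
  -- term integrability
  have hTint : ∀ i j, Integrable (fun p : (sphere (0:EuclideanSpace ℝ (Fin d)) 1) ×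
      (sphere (0:EuclideanSpace ℝ (Fin d)) 1) => ind i p.1 * ind j p.2 * Kr p)
      ((sphereMeasure d).prod (sphereMeasure d)) := by
    intro i j
    have hle : ∀ (k : Fin 4) x, ind k x ≤ 1 := by
      intro k x
      rw [hind_def]
      simp only []
      by_cases h : x ∈ A k <;> simp [Set.indicator_apply, h]
    have hnn : ∀ (k : Fin 4) x, 0 ≤ ind k x := by
      intro k x
      rw [hind_def]
      simp only []
      by_cases h : x ∈ A k <;> simp [Set.indicator_apply, h]
    have hasm : AEStronglyMeasurable (fun p : (sphere (0:EuclideanSpace ℝ (Fin d)) 1) ×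
        (sphere (0:EuclideanSpace ℝ (Fin d)) 1) => ind i p.1 * ind j p.2 * Kr p)
        ((sphereMeasure d).prod (sphereMeasure d)) :=
      ((((hind_meas i).comp measurable_fst).mul
        ((hind_meas j).comp measurable_snd)).mul hKr_cont.measurable).aestronglyMeasurable
    apply Integrable.mono' (integrable_const ((2:ℝ)^s)) hasm
    filter_upwards with p
    have h0 : 0 ≤ ind i p.1 * ind j p.2 * Kr p :=
      mul_nonneg (mul_nonneg (hnn i p.1) (hnn j p.2)) (hKr_nonneg p)
    rw [Real.norm_eq_abs, abs_of_nonneg h0]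
    have hb : ind i p.1 * ind j p.2 * Kr p ≤ 1 * 1 * ((2:ℝ)^s) := by
      apply mul_le_mul (mul_le_mul (hle i p.1) (hle j p.2) (hnn j p.2) zero_le_one)
        (hKr_bound p) (hKr_nonneg p) (by norm_num)
    linarith
  set T : Fin 4 → Fin 4 → ℝ := fun i j => ∫ p, ind i p.1 * ind j p.2 * Kr p
      ∂((sphereMeasure d).prod (sphereMeasure d)) with hT_def
  -- expansion of the double integral
  have hexp : (∫ p, wR p.1 * wR p.2 * Kr p ∂((sphereMeasure d).prod (sphereMeasure d)))
      = ∑ i, ∑ j, ((c i / m i) * (c j / m j)) * T i j := by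
    have hpt : ∀ p : (sphere (0:EuclideanSpace ℝ (Fin d)) 1) ×
        (sphere (0:EuclideanSpace ℝ (Fin d)) 1),
        wR p.1 * wR p.2 * Kr p
          = ∑ i, ∑ j, ((c i / m i) * (c j / m j)) * (ind i p.1 * ind j p.2 * Kr p) := by
      intro p
      rw [hwR_def]
      simp only []
      rw [Finset.sum_mul_sum, Finset.sum_mul]
      apply Finset.sum_congr rfl; intro i _
      rw [Finset.sum_mul]
      apply Finset.sum_congr rfl; intro j _
      ring
    rw [show (fun p : (sphere (0:EuclideanSpace ℝ (Fin d)) 1) ×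
        (sphere (0:EuclideanSpace ℝ (Fin d)) 1) => wR p.1 * wR p.2 * Kr p)
        = fun p => ∑ i, ∑ j, ((c i / m i) * (c j / m j)) * (ind i p.1 * ind j p.2 * Kr p)
      from funext hpt]
    rw [integral_finset_sum _ (fun i _ => integrable_finset_sum _
      (fun j _ => ((hTint i j).const_mul _)))]
    apply Finset.sum_congr rfl; intro i _
    rw [integral_finset_sum _ (fun j _ => ((hTint i j).const_mul _))]
    apply Finset.sum_congr rfl; intro j _
    simp only [hT_def]
    rw [MeasureTheory.integral_const_mul]
  rw [hexp]
  -- bounds on T i j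
  have hTij : ∀ i j, |T i j - K i j * (m i * m j)| ≤ δ * (m i * m j) := by
    intro i j
    have hmeasP : MeasurableSet (A i ×ˢ A j) := (hAmeas i).prod (hAmeas j)
    have hμP : (((sphereMeasure d).prod (sphereMeasure d)) (A i ×ˢ A j)).toReal = m i * m j := by
      rw [Measure.prod_prod, ENNReal.toReal_mul, hm_def]
    have hconst_int : Integrable ((A i ×ˢ A j).indicator (fun _ => K i j))
        ((sphereMeasure d).prod (sphereMeasure d)) := (integrable_const _).indicator hmeasP
    have hconst_val : (∫ p, (A i ×ˢ A j).indicator (fun _ => K i j) p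
        ∂((sphereMeasure d).prod (sphereMeasure d))) = K i j * (m i * m j) := by
      rw [integral_indicator_const _ hmeasP, smul_eq_mul, measureReal_def, hμP, mul_comm]
    have hdiff : T i j - K i j * (m i * m j)
        = ∫ p, (ind i p.1 * ind j p.2 * Kr p - (A i ×ˢ A j).indicator (fun _ => K i j) p)
          ∂((sphereMeasure d).prod (sphereMeasure d)) := by
      rw [integral_sub (hTint i j) hconst_int, hT_def, hconst_val]
    rw [hdiff]
    have hptwise : ∀ p : (sphere (0:EuclideanSpace ℝ (Fin d)) 1) ×
        (sphere (0:EuclideanSpace ℝ (Fin d)) 1),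
        |ind i p.1 * ind j p.2 * Kr p - (A i ×ˢ A j).indicator (fun _ => K i j) p|
          ≤ (A i ×ˢ A j).indicator (fun _ => δ) p := by
      intro p
      by_cases hp : p ∈ A i ×ˢ A j
      · have h1 : p.1 ∈ A i := hp.1
        have h2 : p.2 ∈ A j := hp.2
        rw [Set.indicator_of_mem hp, Set.indicator_of_mem hp]
        have hi1 : ind i p.1 = 1 := by rw [hind_def]; simp [Set.indicator_of_mem h1]
        have hi2 : ind j p.2 = 1 := by rw [hind_def]; simp [Set.indicator_of_mem h2]
        rw [hi1, hi2, one_mul, one_mul]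
        have hd1 : dist ((p.1 : EuclideanSpace ℝ (Fin d))) (P i) < e (i, j) := by
          have := h1
          rw [hA_def] at this
          simp only [Set.mem_preimage, mem_ball] at this
          exact lt_of_lt_of_le this (hεle (i, j))
        have hd2 : dist ((p.2 : EuclideanSpace ℝ (Fin d))) (P j) < e (i, j) := by
          have := h2
          rw [hA_def] at this
          simp only [Set.mem_preimage, mem_ball] at this
          exact lt_of_lt_of_le this (hεle (i, j))
        exact hprop (i, j) _ _ hd1 hd2
      · rw [Set.indicator_of_notMem hp, Set.indicator_of_notMem hp]
        have hzero : ind i p.1 * ind j p.2 = 0 := by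
          rw [Set.mem_prod] at hp
          rcases not_and_or.1 hp with h | h
          · have hz : ind i p.1 = 0 := by rw [hind_def]; simp [Set.indicator_of_notMem h]
            rw [hz, zero_mul]
          · have hz : ind j p.2 = 0 := by rw [hind_def]; simp [Set.indicator_of_notMem h]
            rw [hz, mul_zero]
        rw [hzero, zero_mul, sub_zero, abs_zero]
    calc |∫ p, (ind i p.1 * ind j p.2 * Kr p - (A i ×ˢ A j).indicator (fun _ => K i j) p)
          ∂((sphereMeasure d).prod (sphereMeasure d))|
        ≤ ∫ p, |ind i p.1 * ind j p.2 * Kr p - (A i ×ˢ A j).indicator (fun _ => K i j) p|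
          ∂((sphereMeasure d).prod (sphereMeasure d)) := by
          have := norm_integral_le_integral_norm (μ := (sphereMeasure d).prod (sphereMeasure d))
            (f := fun p => ind i p.1 * ind j p.2 * Kr p
              - (A i ×ˢ A j).indicator (fun _ => K i j) p)
          simpa [Real.norm_eq_abs] using this
      _ ≤ ∫ p, (A i ×ˢ A j).indicator (fun _ => δ) p
          ∂((sphereMeasure d).prod (sphereMeasure d)) := by
          apply integral_mono (((hTint i j).sub hconst_int).abs)
            ((integrable_const δ).indicator hmeasP) hptwise
      _ = δ * (m i * m j) := by
          rw [integral_indicator_const _ hmeasP, smul_eq_mul, measureReal_def, hμP, mul_comm]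
  -- final arithmetic
  have key : ∀ i j, c i * c j * K i j - δ ≤ (c i / m i) * (c j / m j) * T i j := by
    intro i j
    have hMi := hmpos i
    have hMj := hmpos j
    have hM : 0 < m i * m j := mul_pos hMi hMj
    have habs := abs_le.1 (hTij i j)
    have heq : (c i / m i) * (c j / m j) * T i j = (c i * c j) * T i j / (m i * m j) := by
      field_simp
    rw [heq]
    rcases hc1 i j with h | h <;> rw [h] <;> rw [le_div_iff₀ hM] <;>
      nlinarith [habs.1, habs.2, hM, hδpos, hmpos i, hmpos j]
  have hsum : Q - 16 * δ ≤ ∑ i, ∑ j, ((c i / m i) * (c j / m j)) * T i j := by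
    have h1 : ∑ i, ∑ j, (c i * c j * K i j - δ)
        ≤ ∑ i, ∑ j, ((c i / m i) * (c j / m j)) * T i j :=
      Finset.sum_le_sum (fun i _ => Finset.sum_le_sum (fun j _ => key i j))
    calc Q - 16 * δ = ∑ i, ∑ j, (c i * c j * K i j - δ) := by
          rw [Finset.sum_congr rfl (fun i _ => Finset.sum_sub_distrib ..)]
          rw [Finset.sum_sub_distrib, hQsum]
          simp [Finset.sum_const, Finset.card_univ]
          ring
      _ ≤ _ := h1
  have : Q - 16 * δ = Q / 17 := by rw [hδ_def]; ring
  linarith [hsum, hQpos]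


/-- for `d ≥ 3` and `λ < −2` one has `I₂(d,λ) > 0` (stated via the explicit
integral and via the Rodrigues formula
`(1−t²)^{(d−3)/2} P_{2,d}(t) = R_{2,d} ∂² (1−t²)^{2+(d−3)/2}`,
`R_{2,d} = Γ((d−1)/2)/(2² Γ(2+(d−1)/2)) > 0`); in particular the bound
`H_λ(g) ≤ H_λ(μ_g 𝟏)` of Proposition 2.2 fails for `λ < −2`. -/
theorem statement15 (d : ℕ) (hd : 3 ≤ d) (lam : ℝ) (hlam : lam < -2) :
    (∫ t in (-1 : ℝ)..1, (1 - t) ^ (-lam / 2) *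
        iteratedDeriv 2 (fun s : ℝ => (1 - s ^ 2) ^ ((2 : ℝ) + ((d : ℝ) - 3) / 2)) t) > 0 ∧
      sphereArea (d - 1) *
        ((Real.Gamma (((d : ℝ) - 1) / 2) / (2 ^ 2 * Real.Gamma (2 + ((d : ℝ) - 1) / 2))) *
          ∫ t in (-1 : ℝ)..1, (1 - t) ^ (-lam / 2) *
            iteratedDeriv 2 (fun s : ℝ => (1 - s ^ 2) ^ ((2 : ℝ) + ((d : ℝ) - 3) / 2)) t) > 0 ∧
      ∃ g : Metric.sphere (0 : EuclideanSpace ℝ (Fin d)) 1 → ℂ,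
        Integrable g (sphereMeasure d) ∧
          Hfun lam g >
            Hfun lam (fun _ : Metric.sphere (0 : EuclideanSpace ℝ (Fin d)) 1 => sphereAvg g) := by
  have hdR : (3:ℝ) ≤ (d:ℝ) := by exact_mod_cast hd
  have ha : 1 < -lam/2 := by linarith
  have hp : (2:ℝ) ≤ (2:ℝ) + ((d:ℝ) - 3)/2 := by linarith
  have hint := keypos (a := -lam/2) (p := (2:ℝ) + ((d:ℝ) - 3)/2) ha hp
  refine ⟨hint, ?_, part3 d hd lam hlam⟩
  have hArea : 0 < sphereArea (d-1) := sphereArea_pos (d-1) (by omega)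
  have hG1 : 0 < Real.Gamma (((d:ℝ) - 1)/2) := Real.Gamma_pos_of_pos (by linarith)
  have hG2 : 0 < Real.Gamma (2 + ((d:ℝ) - 1)/2) := Real.Gamma_pos_of_pos (by linarith)
  apply mul_pos hArea
  apply mul_pos _ hint
  apply div_pos hG1
  positivity
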